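/- Let f = x ↦ x+1 and let g be the homeomorphism of ℝ given by g(x) = (x−n)^{2^{((-1)^n k^{-n})}} + n for x ∈ [n,n+1), with k ≥ 2 an integer. Then the orbit of 1/2 under the group generated by f and g is dense in ℝ; in particular this action is topologically transitive. -/

import Mathlib

noncomputable def pfun18 (c : ℝ) : ℝ := (1 / 2 : ℝ) ^ ((2 : ℝ) ^ c)

lemma pfun18_pos (c : ℝ) : 0 < pfun18 c :=
  Real.rpow_pos_of_pos (by norm_num) _

lemma pfun18_lt_one (c : ℝ) : pfun18 c < 1 :=
  Real.rpow_lt_one (by norm_num) (by norm_num) (Real.rpow_pos_of_pos (by norm_num) c)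

lemma pfun18_zero : pfun18 0 = 1 / 2 := by
  unfold pfun18; rw [Real.rpow_zero, Real.rpow_one]

lemma pfun18_strictAnti : StrictAnti pfun18 := by
  intro c c' h
  exact Real.rpow_lt_rpow_of_exponent_gt (by norm_num) (by norm_num)
    ((Real.rpow_lt_rpow_left_iff (by norm_num : (1:ℝ) < 2)).mpr h)

lemma pfun18_logb {t : ℝ} (h0 : 0 < t) (h1 : t < 1) :
    pfun18 (Real.logb 2 (-Real.logb 2 t)) = t := by
  have hl : Real.logb 2 t < 0 := Real.logb_neg one_lt_two h0 h1
  unfold pfun18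
  rw [Real.rpow_logb (by norm_num) (by norm_num) (by linarith), one_div,
    Real.inv_rpow (by norm_num), ← Real.rpow_neg (by norm_num), neg_neg,
    Real.rpow_logb (by norm_num) (by norm_num) h0]

/-- With `f(x) = x + 1` and `g` the homeomorphism of `ℝ` given by
`g(x) = (x − n) ^ (2 ^ ((-1)ⁿ k⁻ⁿ)) + n` for `x ∈ [n, n+1)` (`k ≥ 2`), the orbit of `1/2`
under the group generated by `f` and `g` is dense in `ℝ`. -/
theorem stmt_18 (k : ℕ) (hk : 2 ≤ k) (f g : ℝ ≃o ℝ)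
    (hf : ∀ x : ℝ, f x = x + 1)
    (hg : ∀ x : ℝ,
      g x = (x - ⌊x⌋) ^ ((2 : ℝ) ^ ((-1 : ℝ) ^ ⌊x⌋ * (k : ℝ) ^ (-⌊x⌋))) + ⌊x⌋) :
    Dense {y : ℝ | ∃ h ∈ Subgroup.closure ({f, g} : Set (ℝ ≃o ℝ)), h (1 / 2 : ℝ) = y} := by
  have hk2 : (2 : ℝ) ≤ (k : ℝ) := by exact_mod_cast hk
  -- f inverse and powers
  have hfinv : ∀ x : ℝ, (f⁻¹) x = x - 1 := by
    intro x
    show f.symm x = x - 1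
    rw [OrderIso.symm_apply_eq, hf]; ring
  have hfz : ∀ m : ℤ, ∀ x : ℝ, (f ^ m) x = x + m := by
    intro m
    induction m using Int.induction_on with
    | zero => intro x; rw [zpow_zero]; show x = x + ((0:ℤ):ℝ); push_cast; ring
    | succ i ih =>
        intro x
        rw [zpow_add_one]
        have h1 : (f ^ (i:ℤ) * f) x = (f ^ (i:ℤ)) (f x) := rfl
        rw [h1, hf, ih]; push_cast; ring
    | pred i ih =>
        intro x
        rw [zpow_sub_one]
        have h1 : (f ^ (-(i:ℤ)) * f⁻¹) x = (f ^ (-(i:ℤ))) (f⁻¹ x) := rfl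
        rw [h1, hfinv, ih]; push_cast; ring
  -- key orbit computation
  have key : ∀ (j : ℕ) (l m : ℤ),
      pfun18 ((l : ℝ) * ((k:ℝ) ^ (2*j))⁻¹) + (m : ℝ) ∈
        {y : ℝ | ∃ h ∈ Subgroup.closure ({f, g} : Set (ℝ ≃o ℝ)), h (1 / 2 : ℝ) = y} := by
    intro j l m
    have hP0 : (0:ℝ) < (k:ℝ) ^ (2*j) := pow_pos (by linarith) _
    -- floor of pfun18 c + 2j
    have hfl : ∀ c : ℝ, ⌊pfun18 c + ((2*j : ℕ) : ℝ)⌋ = ((2*j : ℕ) : ℤ) := by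
      intro c
      have h0 : ⌊pfun18 c⌋ = 0 :=
        Int.floor_eq_zero_iff.mpr ⟨le_of_lt (pfun18_pos c), pfun18_lt_one c⟩
      have : ((2*j : ℕ) : ℝ) = (((2*j : ℕ) : ℤ) : ℝ) := by push_cast; ring
      rw [this, Int.floor_add_intCast, h0, zero_add]
    -- one application of g
    have hg1 : ∀ c : ℝ, g (pfun18 c + ((2*j : ℕ) : ℝ))
        = pfun18 (c + ((k:ℝ) ^ (2*j))⁻¹) + ((2*j : ℕ) : ℝ) := by
      intro c
      rw [hg, hfl c]
      have h1 : ((-1:ℝ)) ^ (((2*j : ℕ)) : ℤ) = 1 := by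
        rw [zpow_natCast, pow_mul]; norm_num
      have h2 : (k:ℝ) ^ (-(((2*j : ℕ)) : ℤ)) = ((k:ℝ) ^ (2*j))⁻¹ := by
        rw [zpow_neg, zpow_natCast]
      have hcast : ((((2*j : ℕ)) : ℤ) : ℝ) = ((2*j : ℕ) : ℝ) := by push_cast; ring
      rw [h1, one_mul, h2, hcast, add_sub_cancel_right]
      congr 1
      unfold pfun18
      rw [← Real.rpow_mul (by norm_num : (0:ℝ) ≤ 1/2),
        ← Real.rpow_add (by norm_num : (0:ℝ) < 2)]
    -- one application of g⁻¹
    have hg2 : ∀ c : ℝ, (g⁻¹) (pfun18 c + ((2*j : ℕ) : ℝ))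
        = pfun18 (c - ((k:ℝ) ^ (2*j))⁻¹) + ((2*j : ℕ) : ℝ) := by
      intro c
      have h := hg1 (c - ((k:ℝ) ^ (2*j))⁻¹)
      rw [sub_add_cancel] at h
      show g.symm _ = _
      rw [OrderIso.symm_apply_eq]
      exact h.symm
    -- zpowers of g
    have hgz : ∀ l' : ℤ, ∀ c : ℝ, (g ^ l') (pfun18 c + ((2*j : ℕ) : ℝ))
        = pfun18 (c + (l' : ℝ) * ((k:ℝ) ^ (2*j))⁻¹) + ((2*j : ℕ) : ℝ) := by
      intro l'
      induction l' using Int.induction_on with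
      | zero =>
          intro c
          rw [zpow_zero]
          have h1 : ((1 : ℝ ≃o ℝ)) (pfun18 c + ((2*j : ℕ) : ℝ)) = pfun18 c + ((2*j : ℕ) : ℝ) := rfl
          rw [h1]
          norm_num
      | succ i ih =>
          intro c
          rw [zpow_add_one]
          have h1 : (g ^ (i:ℤ) * g) (pfun18 c + ((2*j : ℕ) : ℝ))
              = (g ^ (i:ℤ)) (g (pfun18 c + ((2*j : ℕ) : ℝ))) := rfl
          rw [h1, hg1 c, ih]
          congr 2
          push_cast; ring
      | pred i ih =>
          intro c
          rw [zpow_sub_one]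
          have h1 : (g ^ (-(i:ℤ)) * g⁻¹) (pfun18 c + ((2*j : ℕ) : ℝ))
              = (g ^ (-(i:ℤ))) ((g⁻¹) (pfun18 c + ((2*j : ℕ) : ℝ))) := rfl
          rw [h1, hg2 c, ih]
          congr 2
          push_cast; ring
    -- membership
    have hfm : f ∈ Subgroup.closure ({f, g} : Set (ℝ ≃o ℝ)) :=
      Subgroup.subset_closure (Set.mem_insert _ _)
    have hgm : g ∈ Subgroup.closure ({f, g} : Set (ℝ ≃o ℝ)) :=
      Subgroup.subset_closure (Set.mem_insert_of_mem _ rfl)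
    refine ⟨f ^ (m - (2*j : ℕ)) * g ^ l * f ^ (((2*j : ℕ)) : ℤ),
      mul_mem (mul_mem (zpow_mem hfm _) (zpow_mem hgm _)) (zpow_mem hfm _), ?_⟩
    have h1 : (f ^ (m - (2*j : ℕ)) * g ^ l * f ^ (((2*j : ℕ)) : ℤ)) (1/2 : ℝ)
        = (f ^ (m - (2*j : ℕ))) ((g ^ l) ((f ^ (((2*j : ℕ)) : ℤ)) (1/2 : ℝ))) := rfl
    have h2 : (1:ℝ)/2 + ((((2*j : ℕ)) : ℤ) : ℝ) = pfun18 0 + ((2*j : ℕ) : ℝ) := by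
      rw [pfun18_zero]; push_cast; ring
    rw [h1, hfz (((2*j : ℕ)) : ℤ) (1/2 : ℝ), h2, hgz, hfz, zero_add]
    push_cast; ring
  -- density
  rw [dense_iff_exists_between]
  intro a b hab
  set y := (a + b) / 2 with hy
  have hay : a < y := by rw [hy]; linarith
  have hyb : y < b := by rw [hy]; linarith
  set m0 := ⌊y⌋ with hm0
  have hm0y : (m0 : ℝ) ≤ y := Int.floor_le y
  have hym0 : y < (m0 : ℝ) + 1 := Int.lt_floor_add_one y
  set u := max (a - (m0:ℝ)) 0 with hu
  set v := min (b - (m0:ℝ)) 1 with hv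
  have hu0 : (0:ℝ) ≤ u := le_max_right _ _
  have hv1 : v ≤ 1 := min_le_right _ _
  have hvb : v ≤ b - m0 := min_le_left _ _
  have hau : a - m0 ≤ u := le_max_left _ _
  have huv : u < v :=
    lt_min (max_lt (by linarith) (by linarith)) (max_lt (by linarith) one_pos)
  set u1 := (u + v) / 2 with hu1d
  set v1 := (u1 + v) / 2 with hv1d
  have hu1 : 0 < u1 := by rw [hu1d]; linarith
  have hu1v : u1 < v := by rw [hu1d]; linarith
  have huu1 : u < u1 := by rw [hu1d]; linarith
  have hu1v1 : u1 < v1 := by rw [hv1d]; linarith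
  have hv1v : v1 < v := by rw [hv1d]; linarith
  have hv11 : v1 < 1 := lt_of_lt_of_le hv1v hv1
  have hu11 : u1 < 1 := by linarith
  set qv := Real.logb 2 (-Real.logb 2 v1) with hqv
  set qu := Real.logb 2 (-Real.logb 2 u1) with hqu
  have hq : qv < qu := by
    have h1 : Real.logb 2 u1 < Real.logb 2 v1 := Real.logb_lt_logb one_lt_two hu1 hu1v1
    have h2 : Real.logb 2 v1 < 0 := Real.logb_neg one_lt_two (by linarith) hv11
    exact Real.logb_lt_logb one_lt_two (by linarith) (by linarith)
  set d := qu - qv with hd_def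
  have hd : 0 < d := by rw [hd_def]; linarith
  obtain ⟨j, hj⟩ := pow_unbounded_of_one_lt (1/d) (show (1:ℝ) < (k:ℝ)^2 by nlinarith)
  set P := (k:ℝ) ^ (2*j) with hPdef
  have hPeq : P = ((k:ℝ)^2)^j := by rw [hPdef, pow_mul]
  have hP1 : 1/d < P := by rw [hPeq]; exact hj
  have hP0 : (0:ℝ) < P := by rw [hPdef]; exact pow_pos (by linarith) _
  set l := ⌊qv * P⌋ + 1 with hl_def
  have hl1 : qv * P < (l : ℝ) := by
    rw [hl_def]; push_cast; exact Int.lt_floor_add_one _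
  have hl2 : (l : ℝ) ≤ qv * P + 1 := by
    rw [hl_def]; push_cast
    have := Int.floor_le (qv * P)
    linarith
  have hdP : 1 < d * P := by
    have := (div_lt_iff₀ hd).mp hP1
    linarith
  set c := (l : ℝ) * P⁻¹ with hc_def
  have hc1 : qv < c := by
    rw [hc_def, ← div_eq_mul_inv]
    exact (lt_div_iff₀ hP0).mpr hl1
  have hc2 : c < qu := by
    rw [hc_def, ← div_eq_mul_inv]
    apply (div_lt_iff₀ hP0).mpr
    have hqP : qu * P = qv * P + d * P := by rw [hd_def]; ring
    linarith
  have hpc1 : pfun18 c < v1 := by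
    have h := pfun18_strictAnti hc1
    rwa [hqv, pfun18_logb (by linarith) hv11] at h
  have hpc2 : u1 < pfun18 c := by
    have h := pfun18_strictAnti hc2
    rwa [hqu, pfun18_logb hu1 hu11] at h
  refine ⟨pfun18 c + (m0 : ℝ), ?_, by linarith, by linarith⟩
  have := key j l m0
  rwa [← hPdef, ← hc_def] at this
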